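/- Let H be uniformly distributed over F_q^{(n-k)×n}, s uniform over F_q^{n-k}, and e uniform over vectors of Hamming weight t in F_q^n (with t > 0). Then the expectation over H of the statistical distance between e·Hᵀ and s is at most (1/2)·√((q^{n-k} − 1)/(C(n,t)(q-1)^t)). -/

import Mathlib

open Finset

section Aux

variable {F : Type} [Field F] [Fintype F] [DecidableEq F]

private lemma dot_fiber_card {n : ℕ} (e : Fin n → F) (he : e ≠ 0) (c : F) :
    (univ.filter fun h : Fin n → F => dotProduct h e = c).card * Fintype.card F
      = Fintype.card F ^ n := by
  obtain ⟨j, hj⟩ : ∃ j, e j ≠ 0 := by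
    by_contra h; push_neg at h; exact he (funext h)
  have key : ∀ c : F, (univ.filter fun h : Fin n → F => dotProduct h e = c).card
      = (univ.filter fun h : Fin n → F => dotProduct h e = 0).card := by
    intro c
    apply Finset.card_nbij' (fun h => h - Pi.single j (c * (e j)⁻¹))
      (fun h => h + Pi.single j (c * (e j)⁻¹))
    · intro h hh
      simp only [mem_coe, mem_filter, mem_univ, true_and] at hh ⊢
      rw [sub_dotProduct, hh, single_dotProduct]
      field_simp; simp
    · intro h hh
      simp only [mem_coe, mem_filter, mem_univ, true_and] at hh ⊢
      rw [add_dotProduct, hh, single_dotProduct]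
      field_simp; simp
    · intro h _; simp
    · intro h _; simp
  have := Finset.card_eq_sum_card_fiberwise
    (f := fun h : Fin n → F => dotProduct h e) (s := univ) (t := univ)
    (fun x _ => mem_univ _)
  rw [card_univ, Fintype.card_fun, Fintype.card_fin] at this
  rw [this]
  rw [Finset.sum_congr rfl (fun c _ => key c)]
  rw [Finset.sum_const, card_univ, smul_eq_mul, mul_comm, key c]

private lemma mulVec_fiber_card {m n : ℕ} (e : Fin n → F) (he : e ≠ 0) :
    (univ.filter fun H : Matrix (Fin m) (Fin n) F => H.mulVec e = 0).card * Fintype.card F ^ m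
      = Fintype.card F ^ (m * n) := by
  have h1 : (univ.filter fun H : Matrix (Fin m) (Fin n) F => H.mulVec e = 0).card
      = (univ.filter fun h : Fin n → F => dotProduct h e = 0).card ^ m := by
    rw [← Fintype.card_subtype]
    have e1 : {H : Matrix (Fin m) (Fin n) F // H.mulVec e = 0}
        ≃ ∀ _ : Fin m, {h : Fin n → F // dotProduct h e = 0} := by
      refine (Equiv.subtypeEquivRight ?_).trans Equiv.subtypePiEquivPi
      intro H
      constructor
      · intro h i; exact congrFun h i
      · intro h; funext i; exact h i
    rw [Fintype.card_congr e1, Fintype.card_pi]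
    simp [Fintype.card_subtype]
  rw [h1, ← mul_pow, dot_fiber_card e he 0, ← pow_mul, mul_comm n m]

private lemma card_matrix_pow (m n : ℕ) :
    Fintype.card (Matrix (Fin m) (Fin n) F) = Fintype.card F ^ (m * n) := by
  show Fintype.card (Fin m → Fin n → F) = _
  rw [Fintype.card_fun, Fintype.card_fun, Fintype.card_fin, Fintype.card_fin, ← pow_mul,
    mul_comm]

private lemma pair_fiber_card (m n : ℕ) (e e' : Fin n → F) (hne : e ≠ e') :
    (univ.filter fun H : Matrix (Fin m) (Fin n) F => H.mulVec e = H.mulVec e').card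
      = Fintype.card F ^ (m * (n - 1)) := by
  have hd : e - e' ≠ 0 := sub_ne_zero.mpr hne
  have hcond : ∀ H : Matrix (Fin m) (Fin n) F,
      (H.mulVec e = H.mulVec e') ↔ H.mulVec (e - e') = 0 := by
    intro H; rw [Matrix.mulVec_sub, sub_eq_zero]
  rw [Finset.filter_congr (fun H _ => by rw [hcond H])]
  have := mulVec_fiber_card (m := m) (e - e') hd
  have hq : 0 < Fintype.card F ^ m := pow_pos Fintype.card_pos m
  have hexp : m * (n - 1) + m = m * n := by
    cases n with
    | zero => exact absurd (funext fun i => i.elim0) hne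
    | succ n => simp [Nat.mul_succ]
  refine Nat.eq_of_mul_eq_mul_right hq ?_
  rw [this, ← pow_add, hexp]

private lemma supp_card (n : ℕ) (s : Finset (Fin n)) :
    (univ.filter fun e : Fin n → F => (univ.filter fun i => e i ≠ 0) = s).card
      = (Fintype.card F - 1) ^ s.card := by
  rw [← Fintype.card_subtype]
  have e1 : {e : Fin n → F // (univ.filter fun i => e i ≠ 0) = s}
      ≃ ∀ i : Fin n, {x : F // if i ∈ s then x ≠ 0 else x = 0} := by
    refine (Equiv.subtypeEquivRight ?_).trans Equiv.subtypePiEquivPi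
    intro e
    rw [Finset.ext_iff]
    constructor
    · intro h i
      have := h i
      simp only [mem_filter, mem_univ, true_and] at this
      by_cases hi : i ∈ s <;> simp [hi] at this ⊢ <;> tauto
    · intro h i
      have := h i
      simp only [mem_filter, mem_univ, true_and]
      by_cases hi : i ∈ s <;> simp [hi] at this ⊢ <;> tauto
  rw [Fintype.card_congr e1, Fintype.card_pi]
  have : ∀ i : Fin n, Fintype.card {x : F // if i ∈ s then x ≠ 0 else x = 0}
      = if i ∈ s then Fintype.card F - 1 else 1 := by
    intro i
    by_cases hi : i ∈ s <;> simp only [hi, if_true, if_false]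
    · rw [Fintype.card_subtype]
      simp [Finset.filter_ne', Finset.card_erase_of_mem]
    · exact Fintype.card_subtype_eq (0 : F)
  rw [Finset.prod_congr rfl (fun i _ => this i), Finset.prod_ite_mem, univ_inter,
    Finset.prod_const]

private lemma weight_card (n t : ℕ) :
    (univ.filter fun e : Fin n → F => hammingNorm e = t).card
      = n.choose t * (Fintype.card F - 1) ^ t := by
  have := Finset.card_eq_sum_card_fiberwise
    (f := fun e : Fin n → F => univ.filter fun i => e i ≠ 0)
    (s := univ.filter fun e : Fin n → F => hammingNorm e = t)
    (t := univ.powersetCard t) ?_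
  · rw [this]
    have hfib : ∀ s ∈ univ.powersetCard t,
        ((univ.filter fun e : Fin n → F => hammingNorm e = t).filter
          (fun e => (univ.filter fun i => e i ≠ 0) = s)).card
        = (Fintype.card F - 1) ^ t := by
      intro s hs
      rw [Finset.mem_powersetCard] at hs
      rw [Finset.filter_filter]
      have : ∀ e : Fin n → F, (hammingNorm e = t ∧ (univ.filter fun i => e i ≠ 0) = s)
          ↔ (univ.filter fun i => e i ≠ 0) = s := by
        intro e
        constructor
        · exact fun h => h.2
        · intro h
          refine ⟨?_, h⟩
          rw [hammingNorm, show ({i | e i ≠ 0} : Finset (Fin n))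
            = univ.filter fun i => e i ≠ 0 from rfl, h, hs.2]
      rw [Finset.filter_congr (fun e _ => this e), supp_card, hs.2]
    rw [Finset.sum_congr rfl hfib, Finset.sum_const, Finset.card_powersetCard, card_univ,
      Fintype.card_fin, smul_eq_mul]
  · intro e he
    rw [Finset.mem_coe, Finset.mem_filter] at he
    rw [Finset.mem_coe, Finset.mem_powersetCard]
    exact ⟨Finset.subset_univ _, he.2⟩

private lemma sum_sq_card (m n : ℕ) (W : Finset (Fin n → F)) :
    ∑ H : Matrix (Fin m) (Fin n) F, ∑ v : Fin m → F,
      ((W.filter fun e => H.mulVec e = v).card)^2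
    = ∑ e ∈ W, ∑ e' ∈ W, (univ.filter fun H : Matrix (Fin m) (Fin n) F =>
        H.mulVec e = H.mulVec e').card := by
  have step1 : ∀ H : Matrix (Fin m) (Fin n) F,
      ∑ v : Fin m → F, ((W.filter fun e => H.mulVec e = v).card)^2
      = ∑ e ∈ W, ∑ e' ∈ W, (if H.mulVec e = H.mulVec e' then 1 else 0) := by
    intro H
    have : ∀ v : Fin m → F, ((W.filter fun e => H.mulVec e = v).card)^2
        = ∑ e ∈ W, ∑ e' ∈ W,
          (if H.mulVec e = v then 1 else 0) * (if H.mulVec e' = v then 1 else 0) := by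
      intro v
      rw [Finset.card_filter, sq, Finset.sum_mul_sum]
    rw [Finset.sum_congr rfl (fun v _ => this v), Finset.sum_comm]
    refine Finset.sum_congr rfl (fun e _ => ?_)
    rw [Finset.sum_comm]
    refine Finset.sum_congr rfl (fun e' _ => ?_)
    by_cases h : H.mulVec e = H.mulVec e'
    · rw [if_pos h, h]
      rw [Finset.sum_eq_single (H.mulVec e')]
      · simp
      · intro v _ hv; simp [Ne.symm hv]
      · simp
    · rw [if_neg h, Finset.sum_eq_zero]
      intro v _
      by_cases h1 : H.mulVec e = v <;> by_cases h2 : H.mulVec e' = v <;>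
        simp [h1, h2] <;> exact h (h1.trans h2.symm)
  rw [Finset.sum_congr rfl (fun H _ => step1 H), Finset.sum_comm]
  refine Finset.sum_congr rfl (fun e _ => ?_)
  rw [Finset.sum_comm]
  refine Finset.sum_congr rfl (fun e' _ => ?_)
  rw [Finset.card_filter]

private lemma sum_card (m n : ℕ) (W : Finset (Fin n → F)) (H : Matrix (Fin m) (Fin n) F) :
    ∑ v : Fin m → F, ((W.filter fun e => H.mulVec e = v).card) = W.card := by
  exact (Finset.card_eq_sum_card_fiberwise
    (f := fun e => H.mulVec e) (s := W) (t := univ) (fun x _ => mem_univ _)).symm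

end Aux

/-- For `H` uniform over `F_q^{(n-k)×n}`, `e` uniform over weight-`t` vectors and `s`
uniform over `F_q^{n-k}`, the expected statistical distance between `e·Hᵀ` and `s` is at
most `(1/2)·√((q^{n-k}-1)/(C(n,t)(q-1)^t))`. -/
theorem stmt_15 (F : Type) [Field F] [Fintype F] [DecidableEq F] (n k t : ℕ)
    (hkn : k ≤ n) (ht : 0 < t) (htn : t ≤ n) :
    (∑ H : Matrix (Fin (n - k)) (Fin n) F, (1 / 2) * ∑ v : Fin (n - k) → F,
        |((univ.filter (fun e : Fin n → F =>
              hammingNorm e = t ∧ H.mulVec e = v)).card : ℝ)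
            / ((n.choose t : ℝ) * ((Fintype.card F : ℝ) - 1) ^ t)
          - 1 / (Fintype.card F : ℝ) ^ (n - k)|)
      / (Fintype.card (Matrix (Fin (n - k)) (Fin n) F) : ℝ)
    ≤ (1 / 2) * Real.sqrt (((Fintype.card F : ℝ) ^ (n - k) - 1)
        / ((n.choose t : ℝ) * ((Fintype.card F : ℝ) - 1) ^ t)) := by
  classical
  set m := n - k with hm
  set q := Fintype.card F with hq
  have hq2 : 2 ≤ q := Fintype.one_lt_card
  have hq1 : (1 : ℝ) ≤ (q : ℝ) := by exact_mod_cast le_trans (by norm_num) hq2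
  set W := univ.filter fun e : Fin n → F => hammingNorm e = t with hW
  set Nr : ℝ := (n.choose t : ℝ) * ((q : ℝ) - 1) ^ t with hNr
  set Qr : ℝ := (q : ℝ) ^ m with hQr
  set Mr : ℝ := (q : ℝ) ^ (m * n) with hMr
  set Rr : ℝ := (q : ℝ) ^ (m * (n - 1)) with hRr
  have hq2r : (2 : ℝ) ≤ (q : ℝ) := by exact_mod_cast hq2
  have hNcast : (W.card : ℝ) = Nr := by
    rw [hW, weight_card n t, hNr, ← hq, Nat.cast_mul, Nat.cast_pow,
      Nat.cast_sub (by omega : (1:ℕ) ≤ q), Nat.cast_one]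
  have hNrpos : 0 < Nr := by
    apply mul_pos
    · exact_mod_cast Nat.choose_pos htn
    · apply pow_pos; linarith
  have hQrpos : 0 < Qr := pow_pos (by linarith) m
  have hMrpos : 0 < Mr := pow_pos (by linarith) (m * n)
  have hRQ : Rr * Qr = Mr := by
    rw [hRr, hQr, hMr, ← pow_add]
    congr 1
    have hn1 : 1 ≤ n := le_trans ht htn
    cases n with
    | zero => omega
    | succ n => simp [Nat.mul_succ]
  have hcardM : (Fintype.card (Matrix (Fin m) (Fin n) F) : ℝ) = Mr := by
    rw [card_matrix_pow, hMr]; push_cast; rfl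
  -- abbreviate the summand
  have hfilter : ∀ (H : Matrix (Fin m) (Fin n) F) (v : Fin m → F),
      (univ.filter (fun e : Fin n → F => hammingNorm e = t ∧ H.mulVec e = v))
        = W.filter fun e => H.mulVec e = v := by
    intro H v; rw [hW, Finset.filter_filter]
  set a : Matrix (Fin m) (Fin n) F → (Fin m → F) → ℝ :=
    fun H v => ((W.filter fun e => H.mulVec e = v).card : ℝ) with ha
  set x : Matrix (Fin m) (Fin n) F → (Fin m → F) → ℝ :=
    fun H v => a H v / Nr - 1 / Qr with hx
  have hrw : ∀ H : Matrix (Fin m) (Fin n) F,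
      (1 / 2 : ℝ) * ∑ v : Fin m → F,
        |((univ.filter (fun e : Fin n → F =>
              hammingNorm e = t ∧ H.mulVec e = v)).card : ℝ)
            / ((n.choose t : ℝ) * ((q : ℝ) - 1) ^ t) - 1 / (q : ℝ) ^ m|
      = (1 / 2 : ℝ) * ∑ v : Fin m → F, |x H v| := by
    intro H
    congr 1
    refine Finset.sum_congr rfl (fun v _ => ?_)
    rw [hfilter H v]
  rw [Finset.sum_congr rfl (fun H _ => hrw H), ← Finset.mul_sum, hcardM]
  -- sums
  set T : ℝ := ∑ H : Matrix (Fin m) (Fin n) F, ∑ v : Fin m → F, |x H v| with hT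
  set S : ℝ := ∑ H : Matrix (Fin m) (Fin n) F, ∑ v : Fin m → F, (x H v) ^ 2 with hS
  have hS1 : ∑ H : Matrix (Fin m) (Fin n) F, ∑ v : Fin m → F, a H v = Mr * Nr := by
    have : ∀ H : Matrix (Fin m) (Fin n) F, ∑ v : Fin m → F, a H v = Nr := by
      intro H
      rw [ha]
      rw [← Nat.cast_sum, sum_card m n W H, hNcast]
    rw [Finset.sum_congr rfl (fun H _ => this H), Finset.sum_const, card_univ, nsmul_eq_mul,
      hcardM]
  have hS2 : ∑ H : Matrix (Fin m) (Fin n) F, ∑ v : Fin m → F, (a H v) ^ 2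
      = Nr * (Nr * Rr + Mr - Rr) := by
    have hnat := sum_sq_card m n W
    have hcast : ∑ H : Matrix (Fin m) (Fin n) F, ∑ v : Fin m → F, (a H v) ^ 2
        = ∑ e ∈ W, ∑ e' ∈ W, ((univ.filter fun H : Matrix (Fin m) (Fin n) F =>
            H.mulVec e = H.mulVec e').card : ℝ) := by
      simp only [ha]
      exact_mod_cast hnat
    rw [hcast]
    have hpair : ∀ e ∈ W, ∀ e' ∈ W,
        ((univ.filter fun H : Matrix (Fin m) (Fin n) F =>
            H.mulVec e = H.mulVec e').card : ℝ)
        = Rr + (if e = e' then Mr - Rr else 0) := by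
      intro e _ e' _
      by_cases h : e = e'
      · subst h
        have h1 : (univ.filter fun H : Matrix (Fin m) (Fin n) F => H.mulVec e = H.mulVec e)
            = univ := Finset.filter_true_of_mem fun H _ => rfl
        rw [h1, card_univ, hcardM, if_pos rfl]; ring
      · rw [if_neg h, pair_fiber_card m n e e' h, add_zero, hRr]
        push_cast; rfl
    have : ∀ e ∈ W, ∑ e' ∈ W, ((univ.filter fun H : Matrix (Fin m) (Fin n) F =>
        H.mulVec e = H.mulVec e').card : ℝ) = Nr * Rr + (Mr - Rr) := by
      intro e he
      rw [Finset.sum_congr rfl (fun e' he' => hpair e he e' he'), Finset.sum_add_distrib,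
        Finset.sum_const, Finset.sum_ite_eq W e (fun _ => Mr - Rr), if_pos he,
        nsmul_eq_mul, hNcast]
    rw [Finset.sum_congr rfl this, Finset.sum_const, nsmul_eq_mul, hNcast]
    ring
  have hSval : S = Mr * (Qr - 1) / (Nr * Qr) := by
    have expand : ∀ (H : Matrix (Fin m) (Fin n) F) (v : Fin m → F),
        (x H v) ^ 2 = (a H v) ^ 2 * (1 / Nr ^ 2) - a H v * (2 / (Nr * Qr)) + 1 / Qr ^ 2 := by
      intro H v; rw [hx]; ring
    have hconst : ∑ _H : Matrix (Fin m) (Fin n) F, ∑ _v : Fin m → F, (1 / Qr ^ 2 : ℝ)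
        = (Mr * Qr) * (1 / Qr ^ 2) := by
      simp only [Finset.sum_const, card_univ, nsmul_eq_mul]
      rw [hcardM, Fintype.card_fun, Fintype.card_fin]
      push_cast
      rw [hQr]
      ring
    have hsum : S = (∑ H : Matrix (Fin m) (Fin n) F, ∑ v : Fin m → F, (a H v) ^ 2)
          * (1 / Nr ^ 2)
        - (∑ H : Matrix (Fin m) (Fin n) F, ∑ v : Fin m → F, a H v) * (2 / (Nr * Qr))
        + (Mr * Qr) * (1 / Qr ^ 2) := by
      rw [hS]
      rw [Finset.sum_congr rfl (fun H _ => Finset.sum_congr rfl (fun v _ => expand H v))]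
      rw [← hconst]
      simp only [Finset.sum_add_distrib, Finset.sum_sub_distrib, ← Finset.sum_mul]
    rw [hsum, hS1, hS2]
    have hMR : Mr = Rr * Qr := hRQ.symm
    rw [hMR]
    field_simp
    ring
  have hTnn : 0 ≤ T := Finset.sum_nonneg fun H _ =>
    Finset.sum_nonneg fun v _ => abs_nonneg _
  -- Cauchy-Schwarz
  have hCS : T ^ 2 ≤ (Mr * Qr) * S := by
    have h1 : T = ∑ p : Matrix (Fin m) (Fin n) F × (Fin m → F), |x p.1 p.2| := by
      rw [hT, Fintype.sum_prod_type]
    have h2 : S = ∑ p : Matrix (Fin m) (Fin n) F × (Fin m → F), |x p.1 p.2| ^ 2 := by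
      rw [hS, Fintype.sum_prod_type]
      exact Finset.sum_congr rfl fun H _ => Finset.sum_congr rfl fun v _ => (sq_abs _).symm
    rw [h1, h2]
    have := sq_sum_le_card_mul_sum_sq
      (s := (univ : Finset (Matrix (Fin m) (Fin n) F × (Fin m → F))))
      (f := fun p => |x p.1 p.2|)
    refine le_trans this (mul_le_mul_of_nonneg_right (le_of_eq ?_)
      (Finset.sum_nonneg fun p _ => sq_nonneg _))
    rw [card_univ, Fintype.card_prod, Fintype.card_fun, Fintype.card_fin]
    push_cast
    rw [hcardM, hQr]
  have hTle : T ≤ Mr * Real.sqrt ((Qr - 1) / Nr) := by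
    have hb : (Mr * Qr) * S = Mr ^ 2 * ((Qr - 1) / Nr) := by
      rw [hSval]; field_simp
    have h3 : T ^ 2 ≤ Mr ^ 2 * ((Qr - 1) / Nr) := by rw [← hb]; exact hCS
    calc T = Real.sqrt (T ^ 2) := (Real.sqrt_sq hTnn).symm
      _ ≤ Real.sqrt (Mr ^ 2 * ((Qr - 1) / Nr)) := Real.sqrt_le_sqrt h3
      _ = Mr * Real.sqrt ((Qr - 1) / Nr) := by
          rw [Real.sqrt_mul (sq_nonneg Mr), Real.sqrt_sq hMrpos.le]
  rw [div_le_iff₀ hMrpos]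
  calc (1 / 2 : ℝ) * T ≤ (1 / 2) * (Mr * Real.sqrt ((Qr - 1) / Nr)) := by linarith
    _ = 1 / 2 * Real.sqrt ((Qr - 1) / Nr) * Mr := by ring
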